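/- Let H be a bialgebra over a field F, let M ∈ H be an invertible group-like element, and let p ∈ F^× satisfy p^r ≠ 1 for 1 ≤ r ≤ t. Then for any integers c₁, c₂ with c₁ + c₂ = c, the comultiplication satisfies Δ((M ; c choose t)_p) = Σ_{r+s=t} p^{−r(s−c₂)} (M ; c₁ choose r)_p ⊗ M^r (M ; c₂ choose s)_p. -/
import Mathlib

open TensorProduct

noncomputable def pbinom {F A : Type*} [Field F] [Ring A] [Algebra F A]
    (p : Fˣ) (M : A) (c : ℤ) : ℕ → A
  | 0 => 1
  | n + 1 =>
      pbinom p M c n *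
        (((p : F) ^ (n + 1) - 1)⁻¹ • (((p ^ (c - (n : ℤ)) : Fˣ) : F) • M - 1))

section aux
variable {F A : Type*} [Field F] [Ring A] [Algebra F A] (p : Fˣ) (M : A) (c : ℤ)

lemma pbinom_succ (n : ℕ) : pbinom p M c (n+1) =
    pbinom p M c n *
      (((p : F) ^ (n + 1) - 1)⁻¹ • (((p ^ (c - (n : ℤ)) : Fˣ) : F) • M - 1)) := rfl

lemma commute_pbinom (n : ℕ) : Commute M (pbinom p M c n) := by
  induction n with
  | zero => exact Commute.one_right M
  | succ n ih =>
    rw [pbinom_succ]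
    exact ih.mul_right (Commute.smul_right
      ((((Commute.refl M).smul_right _).sub_right (Commute.one_right M))) _)

lemma pbinom_mul (n : ℕ) (h : (p : F) ^ (n+1) ≠ 1) :
    pbinom p M c n * (((p ^ (c - (n : ℤ)) : Fˣ) : F) • M - 1)
      = ((p : F) ^ (n+1) - 1) • pbinom p M c (n+1) := by
  rw [pbinom_succ, mul_smul_comm, smul_smul, mul_inv_cancel₀ (sub_ne_zero.2 h), one_smul]

lemma f_mul {F : Type*} [Field F] (p : Fˣ) (a b : ℤ) :
    ((p ^ a : Fˣ) : F) * ((p ^ b : Fˣ) : F) = ((p ^ (a + b) : Fˣ) : F) := by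
  rw [zpow_add, Units.val_mul]

lemma f_natCast {F : Type*} [Field F] (p : Fˣ) (n : ℕ) :
    ((p ^ (n : ℤ) : Fˣ) : F) = (p : F) ^ n := by
  rw [zpow_natCast, Units.val_pow_eq_pow_val]

end aux

theorem comul_pbinom {F H : Type*} [Field F] [Ring H] [Bialgebra F H]
    (M : H) (hM : IsUnit M)
    (hΔ : Coalgebra.comul (R := F) M = M ⊗ₜ[F] M)
    (hε : Coalgebra.counit (R := F) M = 1)
    (p : Fˣ) (t : ℕ) (hp : ∀ r : ℕ, 1 ≤ r → r ≤ t → (p : F) ^ r ≠ 1)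
    (c c₁ c₂ : ℤ) (hc : c₁ + c₂ = c) :
    Coalgebra.comul (R := F) (pbinom p M c t) =
      ∑ r ∈ Finset.range (t + 1),
        ((p ^ (-(r : ℤ) * (((t : ℤ) - (r : ℤ)) - c₂)) : Fˣ) : F) •
          (pbinom p M c₁ r ⊗ₜ[F] (M ^ r * pbinom p M c₂ (t - r))) := by
  clear hM hε
  revert hp
  induction t with
  | zero =>
    intro _
    simp [pbinom, Algebra.TensorProduct.one_def]
  | succ t ih =>
    intro hp
    have IH := ih (fun r h1 h2 => hp r h1 (h2.trans (Nat.le_succ t)))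
    have hq : (p : F) ^ (t+1) - 1 ≠ 0 := sub_ne_zero.2 (hp (t+1) (by omega) le_rfl)
    have key : ∀ r, r ≤ t →
        (pbinom p M c₁ r ⊗ₜ[F] (M ^ r * pbinom p M c₂ (t - r)))
            * (((p ^ (c - (t : ℤ)) : Fˣ) : F) • (M ⊗ₜ[F] M) - 1)
          = (((p ^ (c₂ - ((t - r : ℕ) : ℤ)) : Fˣ) : F) * ((p : F) ^ (r+1) - 1)) •
              (pbinom p M c₁ (r+1) ⊗ₜ[F] (M ^ (r+1) * pbinom p M c₂ (t - r)))
            + ((p : F) ^ ((t - r) + 1) - 1) •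
              (pbinom p M c₁ r ⊗ₜ[F] (M ^ r * pbinom p M c₂ ((t - r) + 1))) := by
      intro r hr
      have h1 := pbinom_mul p M c₁ r (hp (r+1) (by omega) (by omega))
      have h2 := pbinom_mul p M c₂ (t - r) (hp ((t-r)+1) (by omega) (by omega))
      have hf : ((p ^ (c₂ - ((t - r : ℕ) : ℤ)) : Fˣ) : F) * ((p ^ (c₁ - (r : ℤ)) : Fˣ) : F)
          = ((p ^ (c - (t : ℤ)) : Fˣ) : F) := by
        rw [f_mul]
        congr 2
        omega
      have hc2 : pbinom p M c₂ (t - r) * M = M * pbinom p M c₂ (t - r) :=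
        ((commute_pbinom p M c₂ (t - r))).eq.symm
      conv_rhs =>
        congr
        · rw [mul_smul, smul_tmul', ← h1]
        · rw [← tmul_smul, ← mul_smul_comm, ← h2]
      rw [← hf]
      simp only [mul_sub, sub_mul, mul_one, one_mul, mul_smul_comm, smul_mul_assoc,
        Algebra.TensorProduct.tmul_mul_tmul, sub_tmul, tmul_sub, smul_tmul', tmul_smul,
        smul_sub, smul_smul, pow_succ, mul_assoc, hc2]
      module
    have step1 : ∀ r ∈ Finset.range (t+1),
        (((p ^ (-(r : ℤ) * (((t : ℤ) - (r : ℤ)) - c₂)) : Fˣ) : F) •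
            (pbinom p M c₁ r ⊗ₜ[F] (M ^ r * pbinom p M c₂ (t - r))))
          * (((p : F) ^ (t+1) - 1)⁻¹ • (((p ^ (c - (t : ℤ)) : Fˣ) : F) • (M ⊗ₜ[F] M) - 1))
        = ((p : F) ^ (t+1) - 1)⁻¹ •
            ((((p ^ (-(r : ℤ) * (((t : ℤ) - (r : ℤ)) - c₂)) : Fˣ) : F) *
                ((p ^ (c₂ - ((t - r : ℕ) : ℤ)) : Fˣ) : F) * ((p : F) ^ (r+1) - 1)) •
              (pbinom p M c₁ (r+1) ⊗ₜ[F] (M ^ (r+1) * pbinom p M c₂ (t - r)))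
            + (((p ^ (-(r : ℤ) * (((t : ℤ) - (r : ℤ)) - c₂)) : Fˣ) : F) *
                ((p : F) ^ ((t - r) + 1) - 1)) •
              (pbinom p M c₁ r ⊗ₜ[F] (M ^ r * pbinom p M c₂ ((t - r) + 1)))) := by
      intro r hr
      rw [smul_mul_smul_comm, key r (by simpa [Nat.lt_succ_iff] using hr)]
      module
    rw [pbinom_succ, Bialgebra.comul_mul, IH, map_smul, map_sub, map_smul, hΔ,
      Bialgebra.comul_one, Finset.sum_mul, Finset.sum_congr rfl step1,
      ← Finset.smul_sum, Finset.sum_add_distrib]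
    have eA : ∑ x ∈ Finset.range (t + 1),
          (((p ^ (-(x : ℤ) * (((t : ℤ) - (x : ℤ)) - c₂)) : Fˣ) : F) *
              ((p ^ (c₂ - ((t - x : ℕ) : ℤ)) : Fˣ) : F) * ((p : F) ^ (x+1) - 1)) •
            (pbinom p M c₁ (x+1) ⊗ₜ[F] (M ^ (x+1) * pbinom p M c₂ (t - x)))
        = ∑ j ∈ Finset.range (t + 1 + 1),
          (((p : F) ^ j - 1) *
              ((p ^ (-(j : ℤ) * ((((t+1 : ℕ)) : ℤ) - (j : ℤ) - c₂)) : Fˣ) : F)) •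
            (pbinom p M c₁ j ⊗ₜ[F] (M ^ j * pbinom p M c₂ (t + 1 - j))) := by
      conv_rhs => rw [Finset.sum_range_succ']
      simp only [pow_zero, sub_self, zero_mul, zero_smul, add_zero]
      refine Finset.sum_congr rfl fun r hr => ?_
      have hr' : r ≤ t := by have := Finset.mem_range.mp hr; omega
      have hidx : t + 1 - (r + 1) = t - r := by omega
      have e1 : ((p ^ (-(r : ℤ) * (((t : ℤ) - (r : ℤ)) - c₂)) : Fˣ) : F) *
            ((p ^ (c₂ - ((t - r : ℕ) : ℤ)) : Fˣ) : F)
          = ((p ^ (-(((r+1 : ℕ)) : ℤ) * ((((t+1 : ℕ)) : ℤ) - ((r+1 : ℕ) : ℤ) - c₂)) : Fˣ) : F) := by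
        rw [f_mul]
        congr 2
        push_cast [Nat.cast_sub hr']
        ring
      rw [hidx, e1, mul_comm]
    have eB : ∑ x ∈ Finset.range (t + 1),
          (((p ^ (-(x : ℤ) * (((t : ℤ) - (x : ℤ)) - c₂)) : Fˣ) : F) *
              ((p : F) ^ ((t - x) + 1) - 1)) •
            (pbinom p M c₁ x ⊗ₜ[F] (M ^ x * pbinom p M c₂ ((t - x) + 1)))
        = ∑ j ∈ Finset.range (t + 1 + 1),
          ((p : F) ^ j * ((p : F) ^ (t + 1 - j) - 1) *
              ((p ^ (-(j : ℤ) * ((((t+1 : ℕ)) : ℤ) - (j : ℤ) - c₂)) : Fˣ) : F)) •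
            (pbinom p M c₁ j ⊗ₜ[F] (M ^ j * pbinom p M c₂ (t + 1 - j))) := by
      conv_rhs => rw [Finset.sum_range_succ]
      simp only [Nat.sub_self, pow_zero, sub_self, mul_zero, zero_mul, zero_smul, add_zero]
      refine Finset.sum_congr rfl fun r hr => ?_
      have hr' : r ≤ t := by have := Finset.mem_range.mp hr; omega
      have hidx2 : t + 1 - r = t - r + 1 := by omega
      have e2 : (p : F) ^ r *
            ((p ^ (-(r : ℤ) * ((((t+1 : ℕ)) : ℤ) - (r : ℤ) - c₂)) : Fˣ) : F)
          = ((p ^ (-(r : ℤ) * (((t : ℤ) - (r : ℤ)) - c₂)) : Fˣ) : F) := by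
        rw [← f_natCast, f_mul]
        congr 2
        push_cast
        ring
      rw [hidx2]
      congr 1
      linear_combination (-((p : F) ^ (t - r + 1) - 1)) * e2
    rw [eA, eB, ← Finset.sum_add_distrib]
    have eD : ∀ j ∈ Finset.range (t + 1 + 1),
        (((p : F) ^ j - 1) *
              ((p ^ (-(j : ℤ) * ((((t+1 : ℕ)) : ℤ) - (j : ℤ) - c₂)) : Fˣ) : F)) •
            (pbinom p M c₁ j ⊗ₜ[F] (M ^ j * pbinom p M c₂ (t + 1 - j)))
          + ((p : F) ^ j * ((p : F) ^ (t + 1 - j) - 1) *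
              ((p ^ (-(j : ℤ) * ((((t+1 : ℕ)) : ℤ) - (j : ℤ) - c₂)) : Fˣ) : F)) •
            (pbinom p M c₁ j ⊗ₜ[F] (M ^ j * pbinom p M c₂ (t + 1 - j)))
        = ((p : F) ^ (t + 1) - 1) •
            (((p ^ (-(j : ℤ) * ((((t+1 : ℕ)) : ℤ) - (j : ℤ) - c₂)) : Fˣ) : F) •
              (pbinom p M c₁ j ⊗ₜ[F] (M ^ j * pbinom p M c₂ (t + 1 - j)))) := by
      intro j hj
      rw [← add_smul, smul_smul]
      congr 1
      have hpow : (p : F) ^ j * (p : F) ^ (t + 1 - j) = (p : F) ^ (t + 1) := by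
        rw [← pow_add]
        congr 1
        have := Finset.mem_range.mp hj
        omega
      linear_combination ((p ^ (-(j : ℤ) * ((((t+1 : ℕ)) : ℤ) - (j : ℤ) - c₂)) : Fˣ) : F) * hpow
    rw [Finset.sum_congr rfl eD, ← Finset.smul_sum, smul_smul, inv_mul_cancel₀ hq, one_smul]
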